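/- Let α ∈ (0,4) with α ≠ 1, set c₁ = 1/2 + √(12/α − 3)/6 and c₂ = 1/2 − √(12/α − 3)/6, and let s₁ ≥ 0 and s₂ be real numbers with s₂ ≤ 2s₁ and s₂ ≤ s₁ + 1/2. Then there exists a constant C > 0 such that for all integers n, n₁, n₂ with n = n₁ + n₂, n ≠ 0, |n₁ − c₁ n| ≥ 1, and |n₁ − c₂ n| ≥ 1, one has (1 + |n|)^{s₂ + 1} ≤ C · (1 + |n₁|)^{s₁} · (1 + |n₂|)^{s₁} · |n³ − α n₁³ − α n₂³|^{1/2}. -/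

import Mathlib

/-- helper: monotonicity of rpow with a constant factor -/
lemma rpow_helper {a b k t : ℝ} (hk : 0 < k) (ha : 0 ≤ a) (ht : 0 ≤ t)
    (h : a ≤ k * b) : a ^ t ≤ k ^ t * b ^ t := by
  have hb : 0 ≤ b := by nlinarith
  calc a ^ t ≤ (k * b) ^ t := Real.rpow_le_rpow ha h ht
    _ = k ^ t * b ^ t := Real.mul_rpow hk.le hb

set_option maxHeartbeats 1600000 in
theorem stmt_11 (α : ℝ) (hα : 0 < α) (hα4 : α < 4) (hα1 : α ≠ 1)
    (c₁ c₂ : ℝ)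
    (hc₁ : c₁ = 1/2 + Real.sqrt (12/α - 3) / 6)
    (hc₂ : c₂ = 1/2 - Real.sqrt (12/α - 3) / 6)
    (s₁ s₂ : ℝ) (hs₁ : 0 ≤ s₁) (hs₂ : s₂ ≤ 2 * s₁) (hs₂' : s₂ ≤ s₁ + 1/2) :
    ∃ C > 0, ∀ n n₁ n₂ : ℤ, n = n₁ + n₂ → n ≠ 0 →
      1 ≤ |(n₁ : ℝ) - c₁ * (n : ℝ)| → 1 ≤ |(n₁ : ℝ) - c₂ * (n : ℝ)| →
      (1 + |(n : ℝ)|) ^ (s₂ + 1) ≤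
        C * (1 + |(n₁ : ℝ)|) ^ s₁ * (1 + |(n₂ : ℝ)|) ^ s₁ *
          |(n : ℝ) ^ 3 - α * (n₁ : ℝ) ^ 3 - α * (n₂ : ℝ) ^ 3| ^ ((1 : ℝ)/2) := by
  have h12 : 0 < 12/α - 3 := by
    have : 3 < 12 / α := by rw [lt_div_iff₀ hα]; nlinarith
    linarith
  obtain ⟨r, hr, hrsq, hc1, hc2⟩ :
      ∃ r : ℝ, 0 < r ∧ 3 * α * r ^ 2 = 1 - α / 4 ∧ c₁ = 1/2 + r ∧ c₂ = 1/2 - r := by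
    refine ⟨Real.sqrt (12/α - 3) / 6, by positivity, ?_, hc₁, hc₂⟩
    rw [div_pow, Real.sq_sqrt h12.le]
    field_simp
    ring
  clear hc₁ hc₂ h12
  have hrne : r ≠ 1/2 := by
    intro h
    rw [h] at hrsq
    exact hα1 (by nlinarith)
  obtain ⟨δ, hδ, hδ1, hδ2⟩ : ∃ δ : ℝ, 0 < δ ∧ δ ≤ 1/2 + r ∧ δ ≤ |1/2 - r| := by
    refine ⟨min (1/2 + r) |1/2 - r|, ?_, min_le_left _ _, min_le_right _ _⟩
    apply lt_min (by linarith)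
    rw [abs_pos]
    intro h
    exact hrne (by linarith)
  have hκ₂ : (0:ℝ) < 3 * α * r / 4 := by positivity
  have hκ₃ : (0:ℝ) < 3 * α * δ ^ 2 / 32 := by positivity
  have hCκ2 : (0:ℝ) < (3 * α * r / 4) ^ (-(1/2) : ℝ) := Real.rpow_pos_of_pos hκ₂ _
  have hCκ3 : (0:ℝ) < (3 * α * δ ^ 2 / 32) ^ (-(1/2) : ℝ) := Real.rpow_pos_of_pos hκ₃ _
  have h4δ : (0:ℝ) < 4/δ := by positivity
  have hC1 : (0:ℝ) < (4/δ) ^ s₁ := Real.rpow_pos_of_pos h4δ _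
  refine ⟨(4/δ) ^ s₁ * (4/δ) ^ s₁ * (3 * α * r / 4) ^ (-(1/2) : ℝ)
      + (3 * α * δ ^ 2 / 32) ^ (-(1/2) : ℝ),
    add_pos (mul_pos (mul_pos hC1 hC1) hCκ2) hCκ3, ?_⟩
  intro n n₁ n₂ hn hn0 hd₁ hd₂
  have hcast : (n : ℝ) = (n₁ : ℝ) + (n₂ : ℝ) := by exact_mod_cast hn
  obtain ⟨d₁, hd₁def⟩ : ∃ d : ℝ, d = |(n₁ : ℝ) - c₁ * (n : ℝ)| := ⟨_, rfl⟩
  obtain ⟨d₂, hd₂def⟩ : ∃ d : ℝ, d = |(n₁ : ℝ) - c₂ * (n : ℝ)| := ⟨_, rfl⟩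
  rw [← hd₁def] at hd₁
  rw [← hd₂def] at hd₂
  obtain ⟨N, hNdef⟩ : ∃ N : ℝ, N = |(n : ℝ)| := ⟨_, rfl⟩
  obtain ⟨A, hAdef⟩ : ∃ A : ℝ, A = 1 + N := ⟨_, rfl⟩
  obtain ⟨A₁, hA₁def⟩ : ∃ A : ℝ, A = 1 + |(n₁ : ℝ)| := ⟨_, rfl⟩
  obtain ⟨A₂, hA₂def⟩ : ∃ A : ℝ, A = 1 + |(n₂ : ℝ)| := ⟨_, rfl⟩
  obtain ⟨E, hEdef⟩ : ∃ E : ℝ,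
      E = |(n : ℝ) ^ 3 - α * (n₁ : ℝ) ^ 3 - α * (n₂ : ℝ) ^ 3| := ⟨_, rfl⟩
  rw [← hNdef, ← hAdef, ← hA₁def, ← hA₂def, ← hEdef]
  have hN1 : 1 ≤ N := by
    have : (1 : ℤ) ≤ |n| := Int.one_le_abs hn0
    rw [hNdef, ← Int.cast_abs]
    exact_mod_cast this
  have hN0 : 0 < N := by linarith
  have hA1 : 1 ≤ A := by rw [hAdef]; linarith
  have hA0 : 0 < A := by linarith
  have hAN : A ≤ 2 * N := by rw [hAdef]; linarith
  have hA₁1 : 1 ≤ A₁ := by rw [hA₁def]; linarith [abs_nonneg ((n₁:ℝ))]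
  have hA₂1 : 1 ≤ A₂ := by rw [hA₂def]; linarith [abs_nonneg ((n₂:ℝ))]
  have hA₁0 : 0 < A₁ := by linarith
  have hA₂0 : 0 < A₂ := by linarith
  -- key identity
  have key : (n : ℝ) ^ 3 - α * (n₁ : ℝ) ^ 3 - α * (n₂ : ℝ) ^ 3 =
      -(3 * α) * (n : ℝ) * ((n₁ : ℝ) - c₁ * (n : ℝ)) * ((n₁ : ℝ) - c₂ * (n : ℝ)) := by
    rw [hcast, hc1, hc2]
    linear_combination (-(((n₁ : ℝ) + (n₂ : ℝ)) ^ 3)) * hrsq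
  have hE : E = 3 * α * N * d₁ * d₂ := by
    rw [hEdef, key, abs_mul, abs_mul, abs_mul, abs_neg,
      abs_of_pos (by positivity : (0:ℝ) < 3 * α), ← hNdef, ← hd₁def, ← hd₂def]
  have hE0 : 0 ≤ E := hEdef ▸ abs_nonneg _
  -- sum of distances
  have hdsum : 2 * r * N ≤ d₁ + d₂ := by
    have h := abs_sub ((n₁ : ℝ) - c₂ * (n : ℝ)) ((n₁ : ℝ) - c₁ * (n : ℝ))
    have he : ((n₁ : ℝ) - c₂ * (n : ℝ)) - ((n₁ : ℝ) - c₁ * (n : ℝ)) = (c₁ - c₂) * (n : ℝ) := by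
      ring
    have hcc : c₁ - c₂ = 2 * r := by rw [hc1, hc2]; ring
    have habs : |(c₁ - c₂) * (n : ℝ)| = 2 * r * N := by
      rw [abs_mul, hcc, abs_of_pos (by linarith : (0:ℝ) < 2*r), hNdef]
    rw [he, habs, ← hd₁def, ← hd₂def] at h
    linarith
  have hd₁0 : (0:ℝ) < d₁ := lt_of_lt_of_le one_pos hd₁
  have hd₂0 : (0:ℝ) < d₂ := lt_of_lt_of_le one_pos hd₂
  have hdd : r * N ≤ d₁ * d₂ := by
    rcases le_total d₁ d₂ with h | h
    · calc r * N ≤ d₂ := by linarith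
        _ ≤ d₁ * d₂ := le_mul_of_one_le_left hd₂0.le hd₁
    · calc r * N ≤ d₁ := by linarith
        _ ≤ d₁ * d₂ := le_mul_of_one_le_right hd₁0.le hd₂
  have hEκ₂ : (3 * α * r / 4) * A ^ 2 ≤ E := by
    rw [hE]
    have h1 : A ^ 2 ≤ (2 * N) ^ 2 := pow_le_pow_left₀ hA0.le hAN 2
    calc (3 * α * r / 4) * A ^ 2 ≤ (3 * α * r / 4) * (2 * N) ^ 2 :=
          mul_le_mul_of_nonneg_left h1 hκ₂.le
      _ = 3 * α * N * (r * N) := by ring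
      _ ≤ 3 * α * N * (d₁ * d₂) := mul_le_mul_of_nonneg_left hdd (by positivity)
      _ = 3 * α * N * d₁ * d₂ := by ring
  -- the product A₁ * A₂ dominates A
  have hprod : A ≤ A₁ * A₂ := by
    have h := abs_add_le (n₁ : ℝ) (n₂ : ℝ)
    have hab : 0 ≤ |(n₁:ℝ)| * |(n₂:ℝ)| := mul_nonneg (abs_nonneg _) (abs_nonneg _)
    have hA1A2 : A₁ * A₂ = 1 + (|(n₁:ℝ)| + |(n₂:ℝ)|) + |(n₁:ℝ)| * |(n₂:ℝ)| := by
      rw [hA₁def, hA₂def]; ring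
    rw [hAdef, hNdef, hcast]
    linarith
  have hA2half : (A ^ 2) ^ ((1:ℝ)/2) = A := by
    rw [← Real.rpow_natCast A 2, ← Real.rpow_mul hA0.le]
    norm_num
  have hA3half : (A ^ 3) ^ ((1:ℝ)/2) = A ^ ((3:ℝ)/2) := by
    rw [← Real.rpow_natCast A 3, ← Real.rpow_mul hA0.le]
    norm_num
  have hP0 : (0:ℝ) ≤ A₁ ^ s₁ * A₂ ^ s₁ :=
    mul_nonneg (Real.rpow_nonneg hA₁0.le _) (Real.rpow_nonneg hA₂0.le _)
  have hEhalf0 : (0:ℝ) ≤ E ^ ((1:ℝ)/2) := Real.rpow_nonneg hE0 _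
  -- main case analysis
  by_cases hcase : d₁ ≤ δ * N / 2 ∨ d₂ ≤ δ * N / 2
  · -- near-resonance case: both |n₁|, |n₂| are comparable to |n|
    have hA₁₂ : δ / 4 * A ≤ A₁ ∧ δ / 4 * A ≤ A₂ := by
      have hδA : δ * A ≤ δ * (2 * N) := mul_le_mul_of_nonneg_left hAN hδ.le
      rcases hcase with h | h
      · have hδc : δ ≤ 1/2 + r := hδ1
        have hδc' : δ ≤ |1/2 - r| := hδ2
        have h1 : (1/2 + r) * N - d₁ ≤ |(n₁ : ℝ)| := by
          have h0 := abs_sub_abs_le_abs_sub (c₁ * (n : ℝ)) (c₁ * (n : ℝ) - (n₁ : ℝ))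
          rw [abs_mul] at h0
          have h2 : |c₁ * (n : ℝ) - (n₁ : ℝ)| = d₁ := by rw [hd₁def, abs_sub_comm]
          simp only [sub_sub_cancel] at h0
          rw [h2] at h0
          have hc : |c₁| = 1/2 + r := by rw [hc1, abs_of_pos (by linarith)]
          rw [hc, ← hNdef] at h0
          linarith
        have h1' : |1/2 - r| * N - d₁ ≤ |(n₂ : ℝ)| := by
          have h0 := abs_sub_abs_le_abs_sub ((1 - c₁) * (n : ℝ)) ((1 - c₁) * (n : ℝ) - (n₂ : ℝ))
          rw [abs_mul] at h0
          have h2 : |(1 - c₁) * (n : ℝ) - (n₂ : ℝ)| = d₁ := by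
            rw [hd₁def]; congr 1; rw [hcast]; ring
          simp only [sub_sub_cancel] at h0
          rw [h2] at h0
          have hc : |1 - c₁| = |1/2 - r| := by rw [hc1]; congr 1; ring
          rw [hc, ← hNdef] at h0
          linarith
        have hm1 : δ * N ≤ (1/2 + r) * N := mul_le_mul_of_nonneg_right hδ1 hN0.le
        have hm2 : δ * N ≤ |1/2 - r| * N := mul_le_mul_of_nonneg_right hδ2 hN0.le
        constructor
        · rw [hA₁def]; linarith [abs_nonneg ((n₁:ℝ))]
        · rw [hA₂def]; linarith [abs_nonneg ((n₂:ℝ))]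
      · have h1 : |1/2 - r| * N - d₂ ≤ |(n₁ : ℝ)| := by
          have h0 := abs_sub_abs_le_abs_sub (c₂ * (n : ℝ)) (c₂ * (n : ℝ) - (n₁ : ℝ))
          rw [abs_mul] at h0
          have h2 : |c₂ * (n : ℝ) - (n₁ : ℝ)| = d₂ := by rw [hd₂def, abs_sub_comm]
          simp only [sub_sub_cancel] at h0
          rw [h2] at h0
          have hc : |c₂| = |1/2 - r| := by rw [hc2]
          rw [hc, ← hNdef] at h0
          linarith
        have h1' : (1/2 + r) * N - d₂ ≤ |(n₂ : ℝ)| := by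
          have h0 := abs_sub_abs_le_abs_sub ((1 - c₂) * (n : ℝ)) ((1 - c₂) * (n : ℝ) - (n₂ : ℝ))
          rw [abs_mul] at h0
          have h2 : |(1 - c₂) * (n : ℝ) - (n₂ : ℝ)| = d₂ := by
            rw [hd₂def]; congr 1; rw [hcast]; ring
          simp only [sub_sub_cancel] at h0
          rw [h2] at h0
          have hc : |1 - c₂| = 1/2 + r := by
            rw [hc2]
            have : (1:ℝ) - (1/2 - r) = 1/2 + r := by ring
            rw [this, abs_of_pos (by linarith)]
          rw [hc, ← hNdef] at h0
          linarith
        have hm1 : δ * N ≤ (1/2 + r) * N := mul_le_mul_of_nonneg_right hδ1 hN0.le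
        have hm2 : δ * N ≤ |1/2 - r| * N := mul_le_mul_of_nonneg_right hδ2 hN0.le
        constructor
        · rw [hA₁def]; linarith [abs_nonneg ((n₁:ℝ))]
        · rw [hA₂def]; linarith [abs_nonneg ((n₂:ℝ))]
    obtain ⟨hAA₁, hAA₂⟩ := hA₁₂
    have hA₁' : A ≤ (4/δ) * A₁ := by
      have h := mul_le_mul_of_nonneg_left hAA₁ h4δ.le
      calc A = (4/δ) * (δ/4 * A) := by field_simp
        _ ≤ (4/δ) * A₁ := h
    have hA₂' : A ≤ (4/δ) * A₂ := by
      have h := mul_le_mul_of_nonneg_left hAA₂ h4δ.le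
      calc A = (4/δ) * (δ/4 * A) := by field_simp
        _ ≤ (4/δ) * A₂ := h
    have hAE : A ≤ (3 * α * r / 4) ^ (-(1/2) : ℝ) * E ^ ((1:ℝ)/2) := by
      have hκpos : (0:ℝ) < (3 * α * r / 4) ^ ((1:ℝ)/2) := Real.rpow_pos_of_pos hκ₂ _
      have h1 : (3 * α * r / 4) ^ ((1:ℝ)/2) * A ≤ E ^ ((1:ℝ)/2) := by
        calc (3 * α * r / 4) ^ ((1:ℝ)/2) * A = ((3 * α * r / 4) * A ^ 2) ^ ((1:ℝ)/2) := by
              rw [Real.mul_rpow hκ₂.le (by positivity), hA2half]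
          _ ≤ E ^ ((1:ℝ)/2) := Real.rpow_le_rpow (by positivity) hEκ₂ (by norm_num)
      rw [Real.rpow_neg hκ₂.le, inv_mul_eq_div, le_div_iff₀ hκpos]
      linarith [mul_comm A ((3 * α * r / 4) ^ ((1:ℝ)/2))]
    calc A ^ (s₂ + 1) ≤ A ^ (s₁ + (s₁ + 1)) :=
          Real.rpow_le_rpow_of_exponent_le hA1 (by linarith)
      _ = A ^ s₁ * (A ^ s₁ * A) := by
          rw [Real.rpow_add hA0, Real.rpow_add hA0, Real.rpow_one]
      _ ≤ ((4/δ) ^ s₁ * A₁ ^ s₁) *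
            (((4/δ) ^ s₁ * A₂ ^ s₁) * ((3 * α * r / 4) ^ (-(1/2) : ℝ) * E ^ ((1:ℝ)/2))) := by
          apply mul_le_mul (rpow_helper h4δ hA0.le hs₁ hA₁')
          · apply mul_le_mul (rpow_helper h4δ hA0.le hs₁ hA₂') hAE hA0.le
            exact mul_nonneg (Real.rpow_nonneg h4δ.le _) (Real.rpow_nonneg hA₂0.le _)
          · exact mul_nonneg (Real.rpow_nonneg hA0.le _) hA0.le
          · exact mul_nonneg (Real.rpow_nonneg h4δ.le _) (Real.rpow_nonneg hA₁0.le _)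
      _ = ((4/δ) ^ s₁ * (4/δ) ^ s₁ * (3 * α * r / 4) ^ (-(1/2) : ℝ)) *
            (A₁ ^ s₁ * A₂ ^ s₁ * E ^ ((1:ℝ)/2)) := by ring
      _ ≤ ((4/δ) ^ s₁ * (4/δ) ^ s₁ * (3 * α * r / 4) ^ (-(1/2) : ℝ)
            + (3 * α * δ ^ 2 / 32) ^ (-(1/2) : ℝ)) *
            (A₁ ^ s₁ * A₂ ^ s₁ * E ^ ((1:ℝ)/2)) := by
          apply mul_le_mul_of_nonneg_right (le_add_of_nonneg_right hCκ3.le)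
          exact mul_nonneg hP0 hEhalf0
      _ = ((4/δ) ^ s₁ * (4/δ) ^ s₁ * (3 * α * r / 4) ^ (-(1/2) : ℝ)
            + (3 * α * δ ^ 2 / 32) ^ (-(1/2) : ℝ)) * A₁ ^ s₁ * A₂ ^ s₁ * E ^ ((1:ℝ)/2) := by
          ring
  · -- far from resonance: both distances are large
    push_neg at hcase
    obtain ⟨h1, h2⟩ := hcase
    have hEκ₃ : (3 * α * δ ^ 2 / 32) * A ^ 3 ≤ E := by
      rw [hE]
      have hd : (δ * N / 2) * (δ * N / 2) ≤ d₁ * d₂ :=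
        mul_le_mul h1.le h2.le (by positivity) hd₁0.le
      have hA3 : A ^ 3 ≤ (2 * N) ^ 3 := pow_le_pow_left₀ hA0.le hAN 3
      calc (3 * α * δ ^ 2 / 32) * A ^ 3 ≤ (3 * α * δ ^ 2 / 32) * (2 * N) ^ 3 :=
            mul_le_mul_of_nonneg_left hA3 hκ₃.le
        _ = 3 * α * N * ((δ * N / 2) * (δ * N / 2)) := by ring
        _ ≤ 3 * α * N * (d₁ * d₂) := mul_le_mul_of_nonneg_left hd (by positivity)
        _ = 3 * α * N * d₁ * d₂ := by ring
    have hAE : A ^ ((3:ℝ)/2) ≤ (3 * α * δ ^ 2 / 32) ^ (-(1/2) : ℝ) * E ^ ((1:ℝ)/2) := by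
      have hκpos : (0:ℝ) < (3 * α * δ ^ 2 / 32) ^ ((1:ℝ)/2) := Real.rpow_pos_of_pos hκ₃ _
      have h3 : (3 * α * δ ^ 2 / 32) ^ ((1:ℝ)/2) * A ^ ((3:ℝ)/2) ≤ E ^ ((1:ℝ)/2) := by
        calc (3 * α * δ ^ 2 / 32) ^ ((1:ℝ)/2) * A ^ ((3:ℝ)/2)
            = ((3 * α * δ ^ 2 / 32) * A ^ 3) ^ ((1:ℝ)/2) := by
              rw [Real.mul_rpow hκ₃.le (by positivity), hA3half]
          _ ≤ E ^ ((1:ℝ)/2) := Real.rpow_le_rpow (by positivity) hEκ₃ (by norm_num)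
      rw [Real.rpow_neg hκ₃.le, inv_mul_eq_div, le_div_iff₀ hκpos]
      linarith [mul_comm (A ^ ((3:ℝ)/2)) ((3 * α * δ ^ 2 / 32) ^ ((1:ℝ)/2))]
    calc A ^ (s₂ + 1) ≤ A ^ (s₁ + (3:ℝ)/2) :=
          Real.rpow_le_rpow_of_exponent_le hA1 (by linarith)
      _ = A ^ s₁ * A ^ ((3:ℝ)/2) := by rw [Real.rpow_add hA0]
      _ ≤ (A₁ ^ s₁ * A₂ ^ s₁) * ((3 * α * δ ^ 2 / 32) ^ (-(1/2) : ℝ) * E ^ ((1:ℝ)/2)) := by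
          apply mul_le_mul _ hAE (Real.rpow_nonneg hA0.le _) hP0
          calc A ^ s₁ ≤ (A₁ * A₂) ^ s₁ := Real.rpow_le_rpow hA0.le hprod hs₁
            _ = A₁ ^ s₁ * A₂ ^ s₁ := Real.mul_rpow hA₁0.le hA₂0.le
      _ = (3 * α * δ ^ 2 / 32) ^ (-(1/2) : ℝ) * (A₁ ^ s₁ * A₂ ^ s₁ * E ^ ((1:ℝ)/2)) := by ring
      _ ≤ ((4/δ) ^ s₁ * (4/δ) ^ s₁ * (3 * α * r / 4) ^ (-(1/2) : ℝ)
            + (3 * α * δ ^ 2 / 32) ^ (-(1/2) : ℝ)) *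
            (A₁ ^ s₁ * A₂ ^ s₁ * E ^ ((1:ℝ)/2)) := by
          apply mul_le_mul_of_nonneg_right
            (le_add_of_nonneg_left (mul_pos (mul_pos hC1 hC1) hCκ2).le)
          exact mul_nonneg hP0 hEhalf0
      _ = ((4/δ) ^ s₁ * (4/δ) ^ s₁ * (3 * α * r / 4) ^ (-(1/2) : ℝ)
            + (3 * α * δ ^ 2 / 32) ^ (-(1/2) : ℝ)) * A₁ ^ s₁ * A₂ ^ s₁ * E ^ ((1:ℝ)/2) := by
          ring
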